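/- For any function f ∈ H¹(0,1) and any ε ∈ (0,1), one has ‖f‖²_{L²(0,1)} ≤ (C/ε) ∫₀¹ (1-s) f(s)² ds + C ε² ‖f‖²_{H¹(0,1)}, where C is a universal constant. -/

import Mathlib

open MeasureTheory Set

set_option maxHeartbeats 1600000 in
/-- The unweighted L²(0,1) norm is controlled by a degenerate-weight L² norm plus a small
multiple of the H¹ norm: ‖f‖²_{L²} ≤ (C/ε) ∫₀¹ (1-s) f² + C ε² ‖f‖²_{H¹}. -/
theorem weighted_L2_H1_interpolation :
    ∃ C > 0, ∀ ε ∈ Set.Ioo (0:ℝ) 1, ∀ f f' : ℝ → ℝ,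
      (∀ x ∈ Set.Icc (0:ℝ) 1, HasDerivAt f (f' x) x) →
      IntegrableOn (fun s => f s ^ 2) (Set.Icc (0:ℝ) 1) →
      IntegrableOn (fun s => f' s ^ 2) (Set.Icc (0:ℝ) 1) →
      (∫ s in Set.Ioo (0:ℝ) 1, f s ^ 2) ≤
        C / ε * (∫ s in Set.Ioo (0:ℝ) 1, (1 - s) * f s ^ 2)
          + C * ε ^ 2 * (∫ s in Set.Ioo (0:ℝ) 1, (f s ^ 2 + f' s ^ 2)) := by
  refine ⟨6, by norm_num, ?_⟩
  rintro ε ⟨hε0, hε1⟩ f f' hderiv hf2 hf'2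
  set W := ∫ s in Ioo (0:ℝ) 1, (1 - s) * f s ^ 2 with hWdef
  set T := ∫ s in Ioo (0:ℝ) 1, f s ^ 2 with hTdef
  set T' := ∫ s in Ioo (0:ℝ) 1, f' s ^ 2 with hT'def
  have hf2Ioo : IntegrableOn (fun s => f s ^ 2) (Ioo (0:ℝ) 1) :=
    hf2.mono_set Ioo_subset_Icc_self
  have hf'2Ioo : IntegrableOn (fun s => f' s ^ 2) (Ioo (0:ℝ) 1) :=
    hf'2.mono_set Ioo_subset_Icc_self
  have hW : 0 ≤ W := by
    apply setIntegral_nonneg measurableSet_Ioo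
    intro s hs
    have : (0:ℝ) ≤ 1 - s := by linarith [hs.2]
    positivity
  have hT : 0 ≤ T := setIntegral_nonneg measurableSet_Ioo fun s _ => sq_nonneg _
  have hT' : 0 ≤ T' := setIntegral_nonneg measurableSet_Ioo fun s _ => sq_nonneg _
  have hadd : (∫ s in Ioo (0:ℝ) 1, (f s ^ 2 + f' s ^ 2)) = T + T' :=
    integral_add hf2Ioo hf'2Ioo
  rw [hadd]
  have hWdiv : 0 ≤ 6 / ε * W := by positivity
  rcases le_or_gt (1/2 : ℝ) ε with hhalf | hhalf
  · -- easy case : 6 ε² ≥ 3/2 ≥ 1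
    have key : T ≤ 6 * ε ^ 2 * T := by
      nlinarith [mul_nonneg hT (show (0:ℝ) ≤ 6 * ε ^ 2 - 1 by nlinarith)]
    nlinarith [mul_nonneg (by positivity : (0:ℝ) ≤ 6 * ε ^ 2) hT', key]
  · -- main case ε < 1/2
    set a := 1 - 2*ε with hadef
    set b := 1 - ε with hbdef
    have ha0 : 0 < a := by rw [hadef]; linarith
    have hab : a < b := by rw [hadef, hbdef]; linarith
    have hb1 : b < 1 := by rw [hbdef]; linarith
    have hsubab : Icc a b ⊆ Icc 0 1 := Icc_subset_Icc (by linarith) (by linarith)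
    have hsuba1 : Icc a 1 ⊆ Icc 0 1 := Icc_subset_Icc (by linarith) le_rfl
    -- continuity
    have hfc : ContinuousOn f (Icc 0 1) := fun x hx =>
      (hderiv x hx).continuousAt.continuousWithinAt
    have hgc : ContinuousOn (fun s => f s ^ 2) (Icc 0 1) := hfc.pow 2
    -- a.e. measurability of f' on Icc 0 1
    have hae01 : ∀ᵐ x ∂(volume : Measure ℝ), x ∉ ({0, 1} : Set ℝ) := by
      have h0 : (volume : Measure ℝ) ({0, 1} : Set ℝ) = 0 :=
        ((Set.finite_singleton (1:ℝ)).insert 0).measure_zero _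
      exact measure_eq_zero_iff_ae_notMem.mp h0
    have h1 : f' =ᵐ[volume.restrict (Icc (0:ℝ) 1)] deriv f := by
      filter_upwards [ae_restrict_mem measurableSet_Icc,
        ae_restrict_of_ae hae01] with x hx hx01
      have hx0 : 0 < x := by
        rcases eq_or_lt_of_le hx.1 with h | h
        · exact absurd (by simp [← h]) hx01
        · exact h
      have hx1 : x < 1 := by
        rcases eq_or_lt_of_le hx.2 with h | h
        · exact absurd (by simp [h]) hx01
        · exact h
      exact ((hderiv x hx).deriv).symm
    have hf'm : AEStronglyMeasurable f' (volume.restrict (Icc (0:ℝ) 1)) :=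
      (measurable_deriv f).aestronglyMeasurable.congr h1.symm
    have hfm : AEStronglyMeasurable f (volume.restrict (Icc (0:ℝ) 1)) :=
      hfc.aestronglyMeasurable measurableSet_Icc
    -- integrability of 2 f f'
    have hffm : AEStronglyMeasurable (fun s => 2 * f s * f' s)
        (volume.restrict (Icc (0:ℝ) 1)) := ((hfm.const_mul 2).mul hf'm)
    have hff' : IntegrableOn (fun s => 2 * f s * f' s) (Icc (0:ℝ) 1) := by
      refine Integrable.mono' (hf2.add hf'2) hffm (ae_of_all _ fun s => ?_)
      rw [Real.norm_eq_abs, abs_le]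
      simp only [Pi.add_apply]
      constructor <;> nlinarith [sq_nonneg (f s - f' s), sq_nonneg (f s + f' s)]
    have habs : IntegrableOn (fun s => |2 * f s * f' s|) (Icc (0:ℝ) 1) := hff'.abs
    set K := ∫ s in Icc a 1, |2 * f s * f' s| with hKdef
    -- min point of f² on [a,b]
    obtain ⟨t₀, ht₀mem, ht₀min⟩ :=
      IsCompact.exists_isMinOn isCompact_Icc (nonempty_Icc.mpr hab.le) (hgc.mono hsubab)
    -- ε * f t₀ ^ 2 ≤ M
    set M := ∫ s in Ioo a b, f s ^ 2 with hMdef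
    set P := ∫ s in Ioo (0:ℝ) b, f s ^ 2 with hPdef
    set A₁ := ∫ s in Ioo b 1, f s ^ 2 with hA1def
    have hMP : M ≤ P := by
      refine setIntegral_mono_set (hf2.mono_set ?_) ?_ ?_
      · exact fun x hx => ⟨by linarith [hx.1], by linarith [hx.2, hb1]⟩
      · exact ae_of_all _ fun s => sq_nonneg _
      · exact HasSubset.Subset.eventuallyLE (Ioo_subset_Ioo (by linarith) le_rfl)
    have hεmin : ε * f t₀ ^ 2 ≤ M := by
      have hc : (∫ _ in Ioo a b, f t₀ ^ 2) = ε * f t₀ ^ 2 := by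
        rw [setIntegral_const, measureReal_def, Real.volume_Ioo, smul_eq_mul,
          ENNReal.toReal_ofReal (by linarith)]
        congr 1
        rw [hadef, hbdef]; ring
      rw [← hc]
      refine setIntegral_mono_on (integrableOn_const (by simp))
        (hf2.mono_set (fun x hx => hsubab ⟨hx.1.le, hx.2.le⟩)) measurableSet_Ioo
        (fun s hs => ht₀min ⟨hs.1.le, hs.2.le⟩)
    -- pointwise bound on [b,1]
    have hptwise : ∀ s ∈ Icc b 1, f s ^ 2 ≤ f t₀ ^ 2 + K := by
      intro s hs
      have ht₀s : t₀ ≤ s := le_trans ht₀mem.2 hs.1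
      have huIcc : uIcc t₀ s ⊆ Icc (0:ℝ) 1 := by
        rw [uIcc_of_le ht₀s]
        exact Icc_subset_Icc (by linarith [ht₀mem.1]) hs.2
      have hFTC : ∫ x in t₀..s, 2 * f x * f' x = f s ^ 2 - f t₀ ^ 2 := by
        refine intervalIntegral.integral_eq_sub_of_hasDerivAt (f := fun y => f y ^ 2)
          (f' := fun y => 2 * f y * f' y) (fun x hx => ?_)
          ((hff'.mono_set huIcc).intervalIntegrable)
        have h : HasDerivAt (fun y => f y * f y) (f' x * f x + f x * f' x) x :=
          (hderiv x (huIcc hx)).mul (hderiv x (huIcc hx))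
        have heq : (fun y => f y ^ 2) = fun y => f y * f y := by ext y; ring
        rw [heq]
        exact h.congr_deriv (by beta_reduce; ring)
      have h2 : f s ^ 2 - f t₀ ^ 2 ≤ K := by
        rw [← hFTC]
        calc ∫ x in t₀..s, 2 * f x * f' x ≤ |∫ x in t₀..s, 2 * f x * f' x| := le_abs_self _
          _ ≤ ∫ x in t₀..s, |2 * f x * f' x| :=
              intervalIntegral.abs_integral_le_integral_abs ht₀s
          _ = ∫ x in Ioc t₀ s, |2 * f x * f' x| := intervalIntegral.integral_of_le ht₀s
          _ ≤ K := by
              refine setIntegral_mono_set (habs.mono_set hsuba1)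
                (ae_of_all _ fun x => abs_nonneg _)
                (HasSubset.Subset.eventuallyLE fun x hx =>
                  ⟨by linarith [hx.1, ht₀mem.1], by linarith [hx.2, hs.2]⟩)
      linarith
    -- A₁ ≤ ε * (f t₀ ^ 2 + K)
    have hA1 : A₁ ≤ ε * (f t₀ ^ 2 + K) := by
      have hc : (∫ _ in Ioo b 1, f t₀ ^ 2 + K) = ε * (f t₀ ^ 2 + K) := by
        rw [setIntegral_const, measureReal_def, Real.volume_Ioo, smul_eq_mul,
          ENNReal.toReal_ofReal (by linarith)]
        congr 1
        rw [hbdef]; ring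
      rw [← hc]
      refine setIntegral_mono_on
        (hf2.mono_set (fun x hx => ⟨by linarith [hx.1, ha0, hab], hx.2.le⟩))
        (integrableOn_const (by simp)) measurableSet_Ioo
        (fun s hs => hptwise s ⟨hs.1.le, hs.2.le⟩)
    -- bound ε K
    have hIa2 : (∫ s in Icc a 1, f s ^ 2) = M + A₁ := by
      rw [integral_Icc_eq_integral_Ioo,
        ← Ioc_union_Ioo_eq_Ioo hab.le hb1,
        setIntegral_union ?_ measurableSet_Ioo ?_ ?_,
        integral_Ioc_eq_integral_Ioo]
      · rw [disjoint_left]; rintro x ⟨-, h2⟩ ⟨h3, -⟩; linarith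
      · exact hf2.mono_set fun x hx => ⟨by linarith [hx.1], by linarith [hx.2]⟩
      · exact hf2.mono_set fun x hx => ⟨by linarith [hx.1], hx.2.le⟩
    have hI'a : (∫ s in Icc a 1, f' s ^ 2) ≤ T' := by
      rw [integral_Icc_eq_integral_Ioo]
      refine setIntegral_mono_set hf'2Ioo (ae_of_all _ fun s => sq_nonneg _)
        (HasSubset.Subset.eventuallyLE (Ioo_subset_Ioo (by linarith) le_rfl))
    have hεK : ε * K ≤ (1/4) * (M + A₁) + 4 * ε^2 * T' := by
      have h1 : ε * K = ∫ s in Icc a 1, ε * |2 * f s * f' s| := by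
        rw [hKdef, ← integral_const_mul]
      have h2 : (∫ s in Icc a 1, ε * |2 * f s * f' s|) ≤
          ∫ s in Icc a 1, ((1/4) * f s ^ 2 + 4 * ε^2 * f' s ^ 2) := by
        refine setIntegral_mono_on ((habs.mono_set hsuba1).const_mul ε)
          (((hf2.mono_set hsuba1).const_mul _).add
            ((hf'2.mono_set hsuba1).const_mul _)) measurableSet_Icc
          (fun s _ => ?_)
        rcases abs_cases (2 * f s * f' s) with ⟨h, -⟩ | ⟨h, -⟩ <;> rw [h] <;>
          nlinarith [sq_nonneg (f s - 4 * ε * f' s), sq_nonneg (f s + 4 * ε * f' s), sq_nonneg ε]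
      have h3 : (∫ s in Icc a 1, ((1/4) * f s ^ 2 + 4 * ε^2 * f' s ^ 2)) =
          (1/4) * (M + A₁) + 4 * ε^2 * (∫ s in Icc a 1, f' s ^ 2) := by
        rw [integral_add (((hf2.mono_set hsuba1)).const_mul _)
          ((hf'2.mono_set hsuba1).const_mul _), integral_const_mul, integral_const_mul, hIa2]
      have h4 : 4 * ε^2 * (∫ s in Icc a 1, f' s ^ 2) ≤ 4 * ε^2 * T' := by
        apply mul_le_mul_of_nonneg_left hI'a (by positivity)
      linarith
    -- T = P + A₁
    have hTsplit : T = P + A₁ := by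
      rw [hTdef, ← Ioc_union_Ioo_eq_Ioo (by linarith : (0:ℝ) ≤ b) hb1,
        setIntegral_union ?_ measurableSet_Ioo ?_ ?_, integral_Ioc_eq_integral_Ioo]
      · rw [disjoint_left]; rintro x ⟨-, h2⟩ ⟨h3, -⟩; linarith
      · exact hf2.mono_set fun x hx => ⟨hx.1.le, by linarith [hx.2]⟩
      · exact hf2.mono_set fun x hx => ⟨by linarith [hx.1], hx.2.le⟩
    -- integrability of the weighted integrand
    have hWint : IntegrableOn (fun s => (1 - s) * f s ^ 2) (Icc (0:ℝ) 1) := by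
      refine Integrable.mono' hf2
        (((continuous_const.sub continuous_id).aestronglyMeasurable.restrict).mul
          hf2.aestronglyMeasurable)
        ((ae_restrict_iff' measurableSet_Icc).mpr (ae_of_all _ fun s hs => ?_))
      rw [Real.norm_eq_abs, abs_mul, abs_of_nonneg (by linarith [hs.2] : (0:ℝ) ≤ 1 - s),
        abs_of_nonneg (sq_nonneg _)]
      nlinarith [sq_nonneg (f s), hs.1, hs.2]
    -- ε P ≤ W
    have hεP : ε * P ≤ W := by
      have h1 : ε * P = ∫ s in Ioo (0:ℝ) b, ε * f s ^ 2 := by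
        rw [hPdef, ← integral_const_mul]
      have h2 : (∫ s in Ioo (0:ℝ) b, ε * f s ^ 2) ≤ ∫ s in Ioo (0:ℝ) b, (1 - s) * f s ^ 2 := by
        refine setIntegral_mono_on
          ((hf2.mono_set fun x hx => ⟨hx.1.le, by linarith [hx.2]⟩).const_mul ε)
          ?_ measurableSet_Ioo (fun s hs => ?_)
        · exact hWint.mono_set fun x hx => ⟨hx.1.le, by linarith [hx.2]⟩
        · have : ε ≤ 1 - s := by rw [hbdef] at hs; linarith [hs.2]
          nlinarith [sq_nonneg (f s)]
      have h3 : (∫ s in Ioo (0:ℝ) b, (1 - s) * f s ^ 2) ≤ W := by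
        refine setIntegral_mono_set (hWint.mono_set Ioo_subset_Icc_self)
          ((ae_restrict_iff' measurableSet_Ioo).mpr (ae_of_all _ fun s hs => ?_))
          (HasSubset.Subset.eventuallyLE (Ioo_subset_Ioo le_rfl hb1.le))
        simp only [Pi.zero_apply]
        exact mul_nonneg (by linarith [hs.2]) (sq_nonneg _)
      linarith
    -- conclusion
    have hP0 : 0 ≤ P := setIntegral_nonneg measurableSet_Ioo fun s _ => sq_nonneg _
    have hA10 : 0 ≤ A₁ := setIntegral_nonneg measurableSet_Ioo fun s _ => sq_nonneg _
    have hM0 : 0 ≤ M := setIntegral_nonneg measurableSet_Ioo fun s _ => sq_nonneg _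
    have hPW : P ≤ W / ε := by
      rw [le_div_iff₀ hε0]; linarith [hεP]
    have h6W : 6 / ε * W = 6 * (W / ε) := by ring
    rw [hTsplit, h6W]
    nlinarith [mul_nonneg (sq_nonneg ε) hP0, mul_nonneg (sq_nonneg ε) hA10,
      mul_nonneg (sq_nonneg ε) hT', mul_nonneg hε0.le hW]
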